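/- For |q| < 1 (or as formal power series in q), the generating function of gap-free partitions satisfies ∑_{n≥1} a(n) q^n = ∑_{m≥1} (q^m/(1−q^m)) · ∏_{k=1}^{m−1} (1+q^k). -/

import Mathlib

open Finset

/-- A partition is *gap-free* if its set of part values is an integer interval,
i.e. the difference between consecutive parts (in nonincreasing order) is at most 1. -/
def Nat.Partition.IsGapFree {n : ℕ} (π : n.Partition) : Prop :=
  ∀ j ∈ π.parts, ∀ k ∈ π.parts, ∀ i : ℕ, j ≤ i → i ≤ k → i ∈ π.parts

/-- `a n` is the number of gap-free partitions of `n`. -/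
noncomputable def a (n : ℕ) : ℕ := Nat.card {π : n.Partition // π.IsGapFree}

namespace GapFreeAux

/-- the part-size function of the gap-free partition attached to `(j, S)`:
`c j S i = j + 1 + #{k ∈ S | i ≤ k}`. -/
def c (j : ℕ) (S : Finset ℕ) (i : ℕ) : ℕ := j + 1 + (S.filter (fun k => i ≤ k)).card

lemma c_succ (j : ℕ) (S : Finset ℕ) (i : ℕ) :
    c j S i = c j S (i + 1) + (if i ∈ S then 1 else 0) := by
  unfold c
  have h : S.filter (fun k => i ≤ k) =
      (S.filter (fun k => i + 1 ≤ k)) ∪ (S.filter (fun k => k = i)) := by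
    rw [← Finset.filter_or]
    apply Finset.filter_congr
    intro k _
    constructor <;> (intro h; omega)
  rw [h, Finset.card_union_of_disjoint, Finset.filter_eq']
  · split <;> simp <;> omega
  · simp only [Finset.disjoint_filter]
    intro k _ h1 h2
    omega

lemma c_anti (j : ℕ) (S : Finset ℕ) : Antitone (c j S) := by
  apply antitone_nat_of_succ_le
  intro i
  rw [c_succ j S i]
  omega

lemma c_ge (j : ℕ) (S : Finset ℕ) (i : ℕ) : j + 1 ≤ c j S i := Nat.le_add_right _ _

lemma c_last {m : ℕ} (j : ℕ) {S : Finset ℕ} (hS : S ⊆ range m) {i : ℕ} (hi : m ≤ i) :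
    c j S i = j + 1 := by
  unfold c
  have : S.filter (fun k => i ≤ k) = ∅ := by
    apply Finset.filter_false_of_mem
    intro k hk
    have := hS hk
    simp only [Finset.mem_range] at this
    omega
  simp [this]

lemma c_step (j : ℕ) (S : Finset ℕ) (i : ℕ) : c j S i ≤ c j S (i + 1) + 1 := by
  rw [c_succ j S i]; split <;> omega

lemma sum_c {m : ℕ} (j : ℕ) {S : Finset ℕ} (hS : S ⊆ range m) :
    ∑ i ∈ range (m + 1), c j S i = (m + 1) * (j + 1) + ∑ k ∈ S, (k + 1) := by
  unfold c
  rw [Finset.sum_add_distrib, Finset.sum_const, card_range, smul_eq_mul]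
  congr 1
  have : ∀ i, (S.filter (fun k => i ≤ k)).card = ∑ k ∈ S, (if i ≤ k then 1 else 0) := by
    intro i; rw [Finset.card_filter]
  simp only [this]
  rw [Finset.sum_comm]
  apply Finset.sum_congr rfl
  intro k hk
  have hkm : k < m := by have := hS hk; simpa using this
  rw [Finset.sum_ite, Finset.sum_const, Finset.sum_const]
  have : (range (m+1)).filter (fun i => i ≤ k) = range (k+1) := by
    ext i; simp [Nat.lt_succ_iff]; omega
  simp [this]

/-- discrete intermediate value theorem for functions with downward steps of size ≤ 1 -/
lemma ivt (f : ℕ → ℕ) (hstep : ∀ i, f i ≤ f (i + 1) + 1) :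
    ∀ d a x, f (a + d) ≤ x → x ≤ f a → ∃ i, a ≤ i ∧ i ≤ a + d ∧ f i = x := by
  intro d
  induction d with
  | zero =>
    intro a x h1 h2
    simp only [Nat.add_zero] at h1
    exact ⟨a, le_refl _, by omega, by omega⟩
  | succ d ih =>
    intro a x h1 h2
    by_cases hx : f a = x
    · exact ⟨a, le_refl _, by omega, hx⟩
    · have hx2 : x ≤ f (a + 1) := by have := hstep a; omega
      have h1' : f ((a + 1) + d) ≤ x := by
        have : (a+1) + d = a + (d+1) := by omega
        rw [this]; exact h1
      obtain ⟨i, hi1, hi2, hi3⟩ := ih (a + 1) x h1' hx2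
      exact ⟨i, by omega, by omega, hi3⟩

/-- two antitone functions with the same multiset of values on `range N` agree on `range N` -/
lemma antitone_eq_of_multiset_eq {N : ℕ} {f g : ℕ → ℕ} (hf : Antitone f) (hg : Antitone g)
    (h : (Multiset.range N).map f = (Multiset.range N).map g) :
    ∀ i < N, f i = g i := by
  have hperm : ((List.range N).map f).Perm ((List.range N).map g) := by
    rw [← Multiset.coe_eq_coe]
    simpa [← Multiset.map_coe, Multiset.range] using h
  have hs : ∀ u : ℕ → ℕ, Antitone u → ((List.range N).map u).Pairwise (· ≥ ·) := by
    intro u hu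
    rw [List.pairwise_map]
    apply List.Pairwise.imp (fun hab => hu (le_of_lt hab))
    exact List.pairwise_lt_range (n := N)
  have heq := List.Perm.eq_of_pairwise' (hs f hf) (hs g hg) hperm
  intro i hi
  have h1 : ((List.range N).map f)[i]'(by simpa using hi) =
      ((List.range N).map g)[i]'(by simpa using hi) := by
    congr 1
  simpa using h1

instance fintypeSubsets (s : Finset ℕ) : Fintype {t : Finset ℕ // t ⊆ s} :=
  Fintype.subtype s.powerset (by simp)

/-- the index type of triples -/
abbrev T := Σ m : ℕ, ℕ × {S : Finset ℕ // S ⊆ range m}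

/-- the weight of a triple -/
def w (t : T) : ℕ := (t.1 + 1) * (t.2.1 + 1) + ∑ k ∈ t.2.2.1, (k + 1)

lemma one_le_w (t : T) : 1 ≤ w t := by
  unfold w; have : 1 ≤ (t.1 + 1) * (t.2.1 + 1) := Nat.one_le_iff_ne_zero.mpr (by positivity)
  omega

/-- the multiset of parts of the gap-free partition attached to a triple -/
def pts (t : T) : Multiset ℕ := (Multiset.range (t.1 + 1)).map (c t.2.1 t.2.2.1)

lemma mem_pts {t : T} {x : ℕ} : x ∈ pts t ↔ ∃ i, i ≤ t.1 ∧ c t.2.1 t.2.2.1 i = x := by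
  unfold pts
  simp only [Multiset.mem_map, Multiset.mem_range, Nat.lt_succ_iff]

/-- the gap-free partition attached to a triple with weight `n` -/
def toPart (t : T) (n : ℕ) (h : w t = n) : n.Partition where
  parts := pts t
  parts_pos := by
    intro x hx
    rw [mem_pts] at hx
    obtain ⟨i, _, hi⟩ := hx
    have := c_ge t.2.1 t.2.2.1 i
    omega
  parts_sum := by
    unfold pts
    rw [show ((Multiset.range (t.1 + 1)).map (c t.2.1 t.2.2.1)).sum
        = ∑ i ∈ range (t.1 + 1), c t.2.1 t.2.2.1 i from rfl, sum_c t.2.1 t.2.2.2, ← h]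
    rfl

lemma toPart_isGapFree (t : T) (n : ℕ) (h : w t = n) : (toPart t n h).IsGapFree := by
  intro u hu v hv x hux hxv
  have hu' : u ∈ pts t := hu
  have hv' : v ∈ pts t := hv
  rw [mem_pts] at hu' hv'
  obtain ⟨i1, hi1, hc1⟩ := hu'
  obtain ⟨i2, hi2, hc2⟩ := hv'
  have hlow : c t.2.1 t.2.2.1 (0 + t.1) ≤ x := by
    have h1 := c_anti t.2.1 t.2.2.1 hi1
    simp only [Nat.zero_add]
    omega
  have hhigh : x ≤ c t.2.1 t.2.2.1 0 := by
    have h2 := c_anti t.2.1 t.2.2.1 (Nat.zero_le i2)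
    omega
  obtain ⟨i, _, hi, hx⟩ := ivt _ (c_step t.2.1 t.2.2.1) t.1 0 x hlow hhigh
  show x ∈ pts t
  rw [mem_pts]
  exact ⟨i, by omega, hx⟩

lemma toPart_parts (t : T) (n : ℕ) (h : w t = n) : (toPart t n h).parts = pts t := rfl

lemma pts_inj {t t' : T} (h : pts t = pts t') : t = t' := by
  obtain ⟨m, j, S, hS⟩ := t
  obtain ⟨m', j', S', hS'⟩ := t'
  simp only [pts] at h
  have hm : m = m' := by
    have := congrArg Multiset.card h
    simpa using this
  subst hm
  have hpt := antitone_eq_of_multiset_eq (c_anti j S) (c_anti j' S') h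
  have hj : j = j' := by
    have h1 := hpt m (Nat.lt_succ_self m)
    rw [c_last j hS (le_refl m), c_last j' hS' (le_refl m)] at h1
    omega
  subst hj
  have hSS : S = S' := by
    ext k
    by_cases hk : k < m
    · have h1 := hpt k (by omega)
      have h2 := hpt (k + 1) (by omega)
      have e1 := c_succ j S k
      have e2 := c_succ j S' k
      constructor <;> intro hmem
      · by_contra hmem'
        simp [hmem] at e1; simp [hmem'] at e2; omega
      · by_contra hmem'
        simp [hmem] at e2; simp [hmem'] at e1; omega
    · constructor <;> intro hmem
      · exact absurd (by simpa using hS hmem) hk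
      · exact absurd (by simpa using hS' hmem) hk
  subst hSS
  rfl

lemma pts_surj {n : ℕ} (π : (n + 1).Partition) (hπ : π.IsGapFree) :
    ∃ t : T, w t = n + 1 ∧ pts t = π.parts := by
  classical
  set L : List ℕ := (Multiset.sort π.parts (· ≤ ·)).reverse with hL
  have hLparts : (↑L : Multiset ℕ) = π.parts := by
    rw [hL, Multiset.coe_reverse, Multiset.sort_eq]
  have hmemL : ∀ x : ℕ, x ∈ L ↔ x ∈ π.parts := by
    intro x; rw [← hLparts]; exact Iff.rfl
  set N := L.length with hNdef
  have hNpos : 0 < N := by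
    rcases Nat.eq_zero_or_pos N with h0 | h
    swap
    · exact h
    · exfalso
      have : L = [] := List.length_eq_zero_iff.mp h0
      have hp : π.parts = 0 := by rw [← hLparts, this]; rfl
      have := π.parts_sum
      rw [hp] at this
      simp at this
  have hsort : L.Pairwise (· ≥ ·) := by
    rw [hL, List.pairwise_reverse]
    exact Multiset.pairwise_sort π.parts (· ≤ ·)
  have hrel : ∀ i1 i2 : ℕ, ∀ h12 : i1 ≤ i2, ∀ h2 : i2 < N, L[i2] ≤ L[i1]'(by omega) := by
    intro i1 i2 h12 h2
    rcases eq_or_lt_of_le h12 with h | h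
    · subst h; exact le_refl _
    · exact List.pairwise_iff_getElem.mp hsort i1 i2 (by omega) h2 h
  set m := N - 1 with hm
  have hNm : N = m + 1 := by omega
  set f : ℕ → ℕ := fun i => L.getD (min i m) 0 with hf
  have hfeq : ∀ i, i ≤ m → ∀ h : i < N, f i = L[i] := by
    intro i hi h
    rw [hf]
    simp only [min_eq_left hi]
    exact List.getD_eq_getElem L 0 h
  have hfmem : ∀ i, i ≤ m → f i ∈ π.parts := by
    intro i hi
    rw [hfeq i hi (by omega), ← hmemL]
    exact List.getElem_mem _
  have hstepdown : ∀ i, f (i + 1) ≤ f i := by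
    intro i
    by_cases him : i < m
    · rw [hfeq i (by omega) (by omega), hfeq (i+1) (by omega) (by omega)]
      exact hrel i (i+1) (by omega) (by omega)
    · have : min (i+1) m = min i m := by omega
      rw [hf]; simp only [this]; exact le_refl _
  have hstepup : ∀ i, f i ≤ f (i + 1) + 1 := by
    intro i
    by_cases him : i < m
    · rw [hfeq i (by omega) (by omega), hfeq (i+1) (by omega) (by omega)]
      by_contra hcon
      push_neg at hcon
      set v := L[i+1]'(by omega) + 1 with hv
      have hvmem : v ∈ π.parts := by
        apply hπ (L[i+1]'(by omega)) _ (L[i]'(by omega)) _ v (by omega) (by omega)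
        · rw [← hmemL]; exact List.getElem_mem _
        · rw [← hmemL]; exact List.getElem_mem _
      rw [← hmemL, List.mem_iff_getElem] at hvmem
      obtain ⟨t, ht, hvt⟩ := hvmem
      by_cases hti : t ≤ i
      · have := hrel t i hti (by omega)
        omega
      · have := hrel (i+1) t (by omega) ht
        omega
    · have : min (i+1) m = min i m := by omega
      rw [hf]; simp only [this]; omega
  have hfm1 : 1 ≤ f m := π.parts_pos (hfmem m (le_refl m))
  set j := f m - 1 with hj
  have hfm : f m = j + 1 := by omega
  set S : Finset ℕ := (range m).filter (fun k => f (k + 1) < f k) with hSdef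
  have hS : S ⊆ range m := Finset.filter_subset _ _
  have hmemS : ∀ k, k < m → (k ∈ S ↔ f (k+1) < f k) := by
    intro k hk; rw [hSdef]; simp [Finset.mem_filter, Finset.mem_range, hk]
  have key : ∀ i, i ≤ m → c j S i = f i := by
    have aux : ∀ d, c j S (m - d) = f (m - d) := by
      intro d
      induction d with
      | zero => simpa using (c_last j hS (le_refl m)).trans hfm.symm
      | succ d ih =>
        by_cases hdm : m ≤ d
        · have : m - (d + 1) = m - d := by omega
          rw [this]; exact ih
        · set i := m - (d + 1) with hi
          have hi1 : i + 1 = m - d := by omega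
          have him : i < m := by omega
          rw [c_succ j S i, hi1, ih, ← hi1]
          by_cases hlt : f (i+1) < f i
          · have h1 : f i = f (i+1) + 1 := by
              have := hstepup i; omega
            rw [if_pos ((hmemS i him).mpr hlt)]
            omega
          · have h1 : f i = f (i+1) := by
              have := hstepdown i; omega
            rw [if_neg (fun hc => hlt ((hmemS i him).mp hc))]
            omega
    intro i hi
    have : i = m - (m - i) := by omega
    rw [this]
    exact aux (m - i)
  have hpts : (Multiset.range (m + 1)).map (c j S) = π.parts := by
    have h1 : (Multiset.range (m + 1)).map (c j S) = (Multiset.range (m+1)).map f :=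
      Multiset.map_congr rfl (by
        intro x hx
        rw [Multiset.mem_range] at hx
        exact key x (by omega))
    rw [h1, ← hLparts]
    have h2 : (List.range (m+1)).map f = L := by
      apply List.ext_getElem
      · rw [List.length_map, List.length_range, ← hNdef]
        omega
      · intro i h1' h2'
        simp only [List.getElem_map, List.getElem_range]
        exact hfeq i (by simp at h1'; omega) (by omega)
    rw [show Multiset.range (m+1) = ↑(List.range (m+1)) from rfl]
    rw [Multiset.map_coe, h2]
  refine ⟨⟨m, j, ⟨S, hS⟩⟩, ?_, hpts⟩
  show (m + 1) * (j + 1) + ∑ k ∈ S, (k + 1) = n + 1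
  rw [← sum_c j hS]
  have h4 := π.parts_sum
  rw [← hpts] at h4
  exact h4

lemma w_bounds {t : T} {n : ℕ} (h : w t = n) :
    t.1 ≤ n ∧ t.2.1 ≤ n ∧ t.2.2.1 ⊆ range n := by
  unfold w at h
  have h1 : t.1 + 1 ≤ (t.1 + 1) * (t.2.1 + 1) := Nat.le_mul_of_pos_right _ (by omega)
  have h2 : t.2.1 + 1 ≤ (t.1 + 1) * (t.2.1 + 1) := Nat.le_mul_of_pos_left _ (by omega)
  refine ⟨by omega, by omega, ?_⟩
  intro k hk
  have h3 := t.2.2.2 hk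
  simp only [Finset.mem_range] at *
  omega

instance fiberFinite (n : ℕ) : Finite {t : T // w t = n} := by
  apply Finite.of_injective (fun x : {t : T // w t = n} =>
    ((⟨x.1.1, Nat.lt_succ_of_le (w_bounds x.2).1⟩ : Fin (n+1)),
     (⟨x.1.2.1, Nat.lt_succ_of_le (w_bounds x.2).2.1⟩ : Fin (n+1)),
     (⟨x.1.2.2.1, (w_bounds x.2).2.2⟩ : {S : Finset ℕ // S ⊆ range n})))
  intro x y hxy
  apply Subtype.ext
  obtain ⟨⟨m, j, S, hS⟩, hx⟩ := x
  obtain ⟨⟨m', j', S', hS'⟩, hy⟩ := y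
  simp only [Prod.mk.injEq, Fin.mk.injEq, Subtype.mk.injEq] at hxy
  obtain ⟨h1, h2, h3⟩ := hxy
  subst h1; subst h2; subst h3
  rfl

lemma card_fiber (n : ℕ) : Nat.card {t : T // w t = n + 1} = a (n + 1) := by
  apply Nat.card_eq_of_bijective
    (fun x => (⟨toPart x.1 (n+1) x.2, toPart_isGapFree x.1 (n+1) x.2⟩ :
      {π : (n+1).Partition // π.IsGapFree}))
  constructor
  · intro x y hxy
    simp only [Subtype.mk.injEq] at hxy
    have := congrArg Nat.Partition.parts hxy
    rw [toPart_parts, toPart_parts] at this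
    exact Subtype.ext (pts_inj this)
  · intro ⟨π, hπ⟩
    obtain ⟨t, hw, hpts⟩ := pts_surj π hπ
    refine ⟨⟨t, hw⟩, ?_⟩
    apply Subtype.ext
    apply Nat.Partition.ext
    rw [toPart_parts, hpts]

lemma prod_one_add {R : Type*} [CommRing R] (x : R) (m : ℕ) :
    ∏ k ∈ range m, (1 + x ^ (k + 1)) =
      ∑ S ∈ (range m).powerset, x ^ (∑ k ∈ S, (k + 1)) := by
  have h1 : ∀ k ∈ range m, (1 + x ^ (k+1)) = (x ^ (k+1) + 1) := fun k _ => by ring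
  rw [Finset.prod_congr rfl h1, Finset.prod_add]
  apply Finset.sum_congr rfl
  intro S _
  rw [Finset.prod_const_one, mul_one, Finset.prod_pow_eq_pow_sum]

lemma sum_subtype_pow {R : Type*} [CommRing R] (x : R) (m : ℕ) :
    ∑ S : {S : Finset ℕ // S ⊆ range m}, x ^ (∑ k ∈ S.1, (k + 1)) =
      ∏ k ∈ range m, (1 + x ^ (k + 1)) := by
  rw [prod_one_add, Finset.sum_subtype ((range m).powerset)
    (fun S => Finset.mem_powerset) (fun S => x ^ (∑ k ∈ S, (k + 1)))]

section Anal

variable {q : ℂ} (hq : ‖q‖ < 1)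

lemma norm_q_pow (k : ℕ) : ‖q ^ k‖ = ‖q‖ ^ k := norm_pow q k

include hq

lemma geom_summable_real (m : ℕ) : Summable (fun j : ℕ => ‖q‖ ^ ((m + 1) * (j + 1))) := by
  have h0 : 0 ≤ ‖q‖ := norm_nonneg q
  have : ∀ j : ℕ, ‖q‖ ^ ((m + 1) * (j + 1)) = ‖q‖ ^ (m+1) * (‖q‖ ^ (m+1)) ^ j := by
    intro j; rw [← pow_mul]; ring_nf
  simp only [this]
  exact (summable_geometric_of_lt_one (by positivity)
    (pow_lt_one₀ h0 hq (by omega))).mul_left _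

lemma fiber_summable_real (m : ℕ) :
    Summable (fun p : ℕ × {S : Finset ℕ // S ⊆ range m} =>
      ‖q‖ ^ ((m + 1) * (p.1 + 1) + ∑ k ∈ p.2.1, (k + 1))) := by
  have h := (geom_summable_real hq m).mul_of_nonneg
    (Summable.of_finite (f := fun S : {S : Finset ℕ // S ⊆ range m} =>
      ‖q‖ ^ (∑ k ∈ S.1, (k + 1))))
    (fun j => by positivity) (fun S => by positivity)
  apply h.congr
  intro p
  rw [← pow_add]

lemma fiber_sum_real (m : ℕ) :
    ∑' p : ℕ × {S : Finset ℕ // S ⊆ range m},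
      ‖q‖ ^ ((m + 1) * (p.1 + 1) + ∑ k ∈ p.2.1, (k + 1)) =
    (‖q‖ ^ (m+1) * (1 - ‖q‖ ^ (m+1))⁻¹) * ∏ k ∈ range m, (1 + ‖q‖ ^ (k + 1)) := by
  have h0 : 0 ≤ ‖q‖ := norm_nonneg q
  rw [Summable.tsum_prod' (fiber_summable_real hq m) (fun j => Summable.of_finite)]
  have hinner : ∀ j : ℕ, ∑' S : {S : Finset ℕ // S ⊆ range m},
      ‖q‖ ^ ((m + 1) * (j + 1) + ∑ k ∈ S.1, (k + 1)) =
      ‖q‖ ^ ((m + 1) * (j + 1)) * ∏ k ∈ range m, (1 + ‖q‖ ^ (k + 1)) := by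
    intro j
    rw [tsum_fintype, ← sum_subtype_pow, Finset.mul_sum]
    apply Finset.sum_congr rfl
    intro S _
    rw [pow_add]
  simp only [hinner]
  rw [tsum_mul_right]
  congr 1
  have h2 : ∀ j : ℕ, ‖q‖ ^ ((m + 1) * (j + 1)) = ‖q‖ ^ (m+1) * (‖q‖ ^ (m+1)) ^ j := by
    intro j; rw [← pow_mul]; ring_nf
  simp only [h2]
  rw [tsum_mul_left, tsum_geometric_of_lt_one (by positivity)
    (pow_lt_one₀ h0 hq (by omega))]

lemma fiber_sum_real_le (m : ℕ) :
    ∑' p : ℕ × {S : Finset ℕ // S ⊆ range m},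
      ‖q‖ ^ ((m + 1) * (p.1 + 1) + ∑ k ∈ p.2.1, (k + 1)) ≤
    ((1 - ‖q‖)⁻¹ * Real.exp (‖q‖ * (1 - ‖q‖)⁻¹)) * ‖q‖ ^ (m+1) := by
  have h0 : 0 ≤ ‖q‖ := norm_nonneg q
  have h1 : 0 < 1 - ‖q‖ := by linarith
  rw [fiber_sum_real hq m]
  have hgeo : (1 - ‖q‖ ^ (m+1))⁻¹ ≤ (1 - ‖q‖)⁻¹ := by
    apply inv_anti₀ h1
    have : ‖q‖ ^ (m+1) ≤ ‖q‖ ^ 1 := pow_le_pow_of_le_one h0 (le_of_lt hq) (by omega)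
    rw [pow_one] at this; linarith
  have hprod : ∏ k ∈ range m, (1 + ‖q‖ ^ (k + 1)) ≤ Real.exp (‖q‖ * (1 - ‖q‖)⁻¹) := by
    calc ∏ k ∈ range m, (1 + ‖q‖ ^ (k + 1))
        ≤ ∏ k ∈ range m, Real.exp (‖q‖ ^ (k + 1)) := by
          apply Finset.prod_le_prod
          · intro k _; positivity
          · intro k _; rw [add_comm]; exact Real.add_one_le_exp _
      _ = Real.exp (∑ k ∈ range m, ‖q‖ ^ (k + 1)) := (Real.exp_sum _ _).symm
      _ ≤ Real.exp (‖q‖ * (1 - ‖q‖)⁻¹) := by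
          apply Real.exp_le_exp.mpr
          have : ∑ k ∈ range m, ‖q‖ ^ (k + 1) = ‖q‖ * ∑ k ∈ range m, ‖q‖ ^ k := by
            rw [Finset.mul_sum]; apply Finset.sum_congr rfl; intro k _; ring
          rw [this]
          apply mul_le_mul_of_nonneg_left _ h0
          calc ∑ k ∈ range m, ‖q‖ ^ k ≤ ∑' k : ℕ, ‖q‖ ^ k :=
                Summable.sum_le_tsum _ (fun k _ => by positivity)
                  (summable_geometric_of_lt_one h0 hq)
            _ = (1 - ‖q‖)⁻¹ := tsum_geometric_of_lt_one h0 hq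
  calc ‖q‖ ^ (m+1) * (1 - ‖q‖ ^ (m+1))⁻¹ * ∏ k ∈ range m, (1 + ‖q‖ ^ (k + 1))
      ≤ ‖q‖ ^ (m+1) * (1 - ‖q‖)⁻¹ * Real.exp (‖q‖ * (1 - ‖q‖)⁻¹) := by
        apply mul_le_mul
        · exact mul_le_mul_of_nonneg_left hgeo (by positivity)
        · exact hprod
        · apply Finset.prod_nonneg; intro k _; positivity
        · positivity
    _ = ((1 - ‖q‖)⁻¹ * Real.exp (‖q‖ * (1 - ‖q‖)⁻¹)) * ‖q‖ ^ (m+1) := by ring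

lemma g_summable : Summable (fun t : T => ‖q‖ ^ w t) := by
  have h0 : 0 ≤ ‖q‖ := norm_nonneg q
  rw [summable_sigma_of_nonneg (fun t => by positivity)]
  constructor
  · intro m; exact fiber_summable_real hq m
  · apply Summable.of_nonneg_of_le (fun m => tsum_nonneg (fun p => by positivity))
      (fun m => fiber_sum_real_le hq m)
    have : ∀ m : ℕ, ((1 - ‖q‖)⁻¹ * Real.exp (‖q‖ * (1 - ‖q‖)⁻¹)) * ‖q‖ ^ (m+1)
        = (((1 - ‖q‖)⁻¹ * Real.exp (‖q‖ * (1 - ‖q‖)⁻¹)) * ‖q‖) * ‖q‖ ^ m := by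
      intro m; ring
    simp only [this]
    exact (summable_geometric_of_lt_one h0 hq).mul_left _

lemma F_summable : Summable (fun t : T => q ^ w t) := by
  apply Summable.of_norm
  simpa [norm_pow] using g_summable hq

lemma fiber_summable_C (m : ℕ) :
    Summable (fun p : ℕ × {S : Finset ℕ // S ⊆ range m} =>
      q ^ ((m + 1) * (p.1 + 1) + ∑ k ∈ p.2.1, (k + 1))) := by
  apply Summable.of_norm
  simpa [norm_pow] using fiber_summable_real hq m

lemma rhs_eq :
    ∑' t : T, q ^ w t =
      ∑' m : ℕ, q ^ (m + 1) / (1 - q ^ (m + 1)) * ∏ k ∈ range m, (1 + q ^ (k + 1)) := by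
  rw [Summable.tsum_sigma (F_summable hq)]
  apply tsum_congr
  intro m
  have hw : ∀ c : ℕ × {S : Finset ℕ // S ⊆ range m},
      w ⟨m, c⟩ = (m + 1) * (c.1 + 1) + ∑ k ∈ c.2.1, (k + 1) := fun c => rfl
  calc ∑' c : ℕ × {S : Finset ℕ // S ⊆ range m}, q ^ w ⟨m, c⟩
      = ∑' (j : ℕ) (S : {S : Finset ℕ // S ⊆ range m}),
          q ^ ((m + 1) * (j + 1) + ∑ k ∈ S.1, (k + 1)) := by
        simp only [hw]
        exact Summable.tsum_prod' (fiber_summable_C hq m) (fun j => Summable.of_finite)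
    _ = ∑' j : ℕ, q ^ ((m + 1) * (j + 1)) * ∏ k ∈ range m, (1 + q ^ (k + 1)) := by
        apply tsum_congr
        intro j
        rw [tsum_fintype, ← sum_subtype_pow, Finset.mul_sum]
        apply Finset.sum_congr rfl
        intro S _
        rw [pow_add]
    _ = (∑' j : ℕ, q ^ ((m + 1) * (j + 1))) * ∏ k ∈ range m, (1 + q ^ (k + 1)) :=
        tsum_mul_right
    _ = q ^ (m + 1) / (1 - q ^ (m + 1)) * ∏ k ∈ range m, (1 + q ^ (k + 1)) := by
        congr 1
        have h2 : ∀ j : ℕ, q ^ ((m + 1) * (j + 1)) = q ^ (m + 1) * (q ^ (m + 1)) ^ j := by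
          intro j; rw [← pow_mul]; ring_nf
        simp only [h2]
        rw [tsum_mul_left, tsum_geometric_of_norm_lt_one (by
          rw [norm_pow]
          exact pow_lt_one₀ (norm_nonneg q) hq (by omega)), div_eq_mul_inv]

set_option maxHeartbeats 1000000 in
lemma lhs_eq :
    ∑' t : T, q ^ w t = ∑' n : ℕ, (a (n + 1) : ℂ) * q ^ (n + 1) := by
  set e := Equiv.sigmaFiberEquiv (fun t : T => w t - 1) with he
  rw [← e.tsum_eq (fun t : T => q ^ w t)]
  have hs : Summable (fun p : (n : ℕ) × {t : T // w t - 1 = n} => q ^ w (e p)) :=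
    e.summable_iff.mpr (F_summable hq)
  rw [Summable.tsum_sigma hs]
  apply tsum_congr
  intro n
  have hcongr : ∀ x : {t : T // w t - 1 = n}, q ^ w (e ⟨n, x⟩) = q ^ (n + 1) := by
    intro x
    have h1 := one_le_w x.1
    have h2 := x.2
    have h3 : w x.1 = n + 1 := by omega
    rw [he, Equiv.sigmaFiberEquiv_apply]
    rw [show ((⟨n, x⟩ : (k : ℕ) × {t : T // w t - 1 = k}).snd : T) = x.1 from rfl, h3]
  rw [tsum_congr hcongr, tsum_const]
  rw [Nat.card_congr (Equiv.subtypeEquivRight (fun t => by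
    have h1 := one_le_w t
    show w t - 1 = n ↔ w t = n + 1
    omega))]
  rw [card_fiber, nsmul_eq_mul]

end Anal

end GapFreeAux

/-- `∑_{n≥1} a(n) qⁿ = ∑_{m≥1} (qᵐ/(1−qᵐ)) · ∏_{k=1}^{m−1} (1+qᵏ)` for `|q| < 1`. -/
theorem gapFree_genFun (q : ℂ) (hq : ‖q‖ < 1) :
    ∑' n : ℕ, (a (n + 1) : ℂ) * q ^ (n + 1) =
      ∑' m : ℕ, q ^ (m + 1) / (1 - q ^ (m + 1)) *
        ∏ k ∈ range m, (1 + q ^ (k + 1)) := by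
  rw [← GapFreeAux.lhs_eq hq]
  exact GapFreeAux.rhs_eq hq
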